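/- (Abstract form of Theorem 3.4.) Let X be a topological space, x₀ ∈ X, and for each pair of points a, b ∈ X let P a b be a set of paths from a to b. Assume: (comp) for all p ∈ P a b and q ∈ P b c there exists r ∈ P a c such that p · q is path-homotopic to r; (i) for every p ∈ P x₀ x₀ there exists p⁻ ∈ P x₀ x₀ such that the loop p · p⁻ is null-homotopic (path-homotopic to the constant loop at x₀); (ii) for every p ∈ P a b there exists some q ∈ P b a. Let S be the subgroupoid of the fundamental groupoid of X generated by the path-homotopy classes of all paths in P. Then every arrow of S from x₀ to x₀ is the path-homotopy class ⟦p⟧ of some p ∈ P x₀ x₀. (In the paper, X = BC_d^θ, P consists of the morphism paths γ_W, and the conclusion says every element of π₁(BC_d^θ) represented by a zigzag of morphism paths is represented by a single morphism path of a closed θ-manifold.) -/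

import Mathlib

attribute [local instance] Path.Homotopic.setoid

open CategoryTheory

private lemma fg_comp_eq_trans {X : Type*} [TopologicalSpace X] {a b c : X}
    (p : Path a b) (q : Path b c) :
    (⟦p⟧ ≫ ⟦q⟧ : FundamentalGroupoid.mk a ⟶ FundamentalGroupoid.mk c) = ⟦p.trans q⟧ :=
  (Path.Homotopic.Quotient.mk_trans p q).symm

private lemma fg_id_eq {X : Type*} [TopologicalSpace X] (a : X) :
    (𝟙 (FundamentalGroupoid.mk a) : FundamentalGroupoid.mk a ⟶ FundamentalGroupoid.mk a)
      = ⟦Path.refl a⟧ := rfl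

/-- In a category, if `f ≫ g = 𝟙` and `f` is iso then `g ≫ f = 𝟙`. -/
private lemma comp_eq_id_swap {C : Type*} [Groupoid C] {a b : C} {f : a ⟶ b} {g : b ⟶ a}
    (h : f ≫ g = 𝟙 a) : g ≫ f = 𝟙 b := by
  have : g = CategoryTheory.inv f := (IsIso.inv_eq_of_hom_inv_id h).symm
  rw [this, IsIso.inv_hom_id]

/-- Abstract form of Theorem 3.4: let `P a b` be a family of paths closed under concatenation up
to path-homotopy (comp), such that every loop of `P` at `x₀` has an inverse in `P x₀ x₀` whose
concatenation with it is null-homotopic (i), and such that every path of `P` admits a path of `P`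
in the opposite direction (ii).  Then every arrow from `x₀` to `x₀` in the subgroupoid of the
fundamental groupoid of `X` generated by the classes of paths of `P` is the path-homotopy class
of a single path of `P x₀ x₀`. -/
theorem arrows_of_generated_subgroupoid_are_single_paths
    {X : Type*} [TopologicalSpace X] (x₀ : X)
    (P : ∀ a b : X, Set (Path a b))
    (hcomp : ∀ (a b c : X), ∀ p ∈ P a b, ∀ q ∈ P b c, ∃ r ∈ P a c, (p.trans q).Homotopic r)
    (hinv : ∀ p ∈ P x₀ x₀, ∃ pinv ∈ P x₀ x₀, (p.trans pinv).Homotopic (Path.refl x₀))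
    (hopp : ∀ (a b : X), ∀ p, p ∈ P a b → ∃ q, q ∈ P b a) :
    ∀ f ∈ (Subgroupoid.generated
        (fun a b : FundamentalGroupoid X =>
          {f : a ⟶ b | ∃ p ∈ P a.as b.as, f = ⟦p⟧})).arrows
        (FundamentalGroupoid.mk x₀) (FundamentalGroupoid.mk x₀),
      ∃ p ∈ P x₀ x₀, f = ⟦p⟧ := by
  -- connectivity transfer along a generator
  have fwd : ∀ a b : X, (∃ p, p ∈ P a b) → (∃ p, p ∈ P x₀ a) → ∃ q, q ∈ P x₀ b := by
    rintro a b ⟨r, hr⟩ ⟨p, hp⟩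
    obtain ⟨q, hq, -⟩ := hcomp x₀ a b p hp r hr
    exact ⟨q, hq⟩
  have bwd : ∀ a b : X, (∃ p, p ∈ P a b) → (∃ q, q ∈ P x₀ b) → ∃ p, p ∈ P x₀ a := by
    rintro a b ⟨r, hr⟩ hq
    obtain ⟨r', hr'⟩ := hopp a b r hr
    exact fwd b a ⟨r', hr'⟩ hq
  -- the key exchange lemma: if `⟦q'⟧ ≫ g` is represented in `P`, so is `⟦q⟧ ≫ g` for any
  -- other `q ∈ P x₀ b`.
  have key : ∀ (b c : FundamentalGroupoid X) (q q' : Path x₀ b.as), q ∈ P x₀ b.as →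
      q' ∈ P x₀ b.as → ∀ (g : b ⟶ c) (r' : Path x₀ c.as), r' ∈ P x₀ c.as →
      (⟦q'⟧ ≫ g : FundamentalGroupoid.mk x₀ ⟶ c) = ⟦r'⟧ →
      ∃ r'' ∈ P x₀ c.as, (⟦q⟧ ≫ g : FundamentalGroupoid.mk x₀ ⟶ c) = ⟦r''⟧ := by
    rintro b c q q' hq hq' g r' hr' h1
    obtain ⟨q'', hq''⟩ := hopp x₀ b.as q' hq'
    obtain ⟨s, hs, hhs⟩ := hcomp x₀ b.as x₀ q hq q'' hq''
    obtain ⟨t, ht, hht⟩ := hcomp x₀ b.as x₀ q' hq' q'' hq''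
    obtain ⟨tinv, htinv, hhtinv⟩ := hinv t ht
    have hs' : (⟦q⟧ ≫ ⟦q''⟧ : FundamentalGroupoid.mk x₀ ⟶ FundamentalGroupoid.mk x₀) = ⟦s⟧ := by
      rw [fg_comp_eq_trans]; exact Quotient.sound hhs
    have ht' : (⟦q'⟧ ≫ ⟦q''⟧ : FundamentalGroupoid.mk x₀ ⟶ FundamentalGroupoid.mk x₀) = ⟦t⟧ := by
      rw [fg_comp_eq_trans]; exact Quotient.sound hht
    have hti : (⟦t⟧ ≫ ⟦tinv⟧ : FundamentalGroupoid.mk x₀ ⟶ FundamentalGroupoid.mk x₀)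
        = 𝟙 (FundamentalGroupoid.mk x₀) := by
      rw [fg_comp_eq_trans, fg_id_eq]; exact Quotient.sound hhtinv
    -- ⟦q'⟧ ≫ (⟦q''⟧ ≫ ⟦tinv⟧) = 𝟙
    have h2 : (⟦q'⟧ : FundamentalGroupoid.mk x₀ ⟶ b) ≫ ((⟦q''⟧ : b ⟶ FundamentalGroupoid.mk x₀)
        ≫ ⟦tinv⟧) = 𝟙 (FundamentalGroupoid.mk x₀) := by
      erw [← Category.assoc, ht', hti]
    have h3 := comp_eq_id_swap h2
    have h4 : (⟦q⟧ ≫ g : FundamentalGroupoid.mk x₀ ⟶ c) = ⟦s⟧ ≫ (⟦tinv⟧ ≫ ⟦r'⟧) := by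
      erw [← hs', ← h1, ← Category.assoc]
      calc (⟦q⟧ ≫ g : FundamentalGroupoid.mk x₀ ⟶ c)
          = ⟦q⟧ ≫ ((⟦q''⟧ ≫ ⟦tinv⟧) ≫ (⟦q'⟧ : FundamentalGroupoid.mk x₀ ⟶ b)) ≫ g := by
            rw [h3, Category.id_comp]
        _ = ((⟦q⟧ ≫ ⟦q''⟧) ≫ ⟦tinv⟧) ≫ ⟦q'⟧ ≫ g := by repeat erw [Category.assoc]
    obtain ⟨u, hu, hhu⟩ := hcomp x₀ x₀ c.as tinv htinv r' hr'
    obtain ⟨v, hv, hhv⟩ := hcomp x₀ x₀ c.as s hs u hu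
    refine ⟨v, hv, ?_⟩
    rw [h4, fg_comp_eq_trans tinv r', (Quotient.sound hhu : (⟦tinv.trans r'⟧ : Path.Homotopic.Quotient x₀ c.as) = ⟦u⟧), fg_comp_eq_trans]
    exact Quotient.sound hhv
  -- the subgroupoid witnessing the theorem
  let S' : Subgroupoid (FundamentalGroupoid X) :=
    { arrows := fun a b => {f | (∃ p ∈ P x₀ a.as, ∃ q ∈ P x₀ b.as,
          (⟦p⟧ ≫ f : FundamentalGroupoid.mk x₀ ⟶ b) = ⟦q⟧) ∨
          ((¬ ∃ p, p ∈ P x₀ a.as) ∧ (¬ ∃ q, q ∈ P x₀ b.as) ∧ a.as ≠ x₀ ∧ b.as ≠ x₀)}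
      inv := by
        rintro a b f (⟨p, hp, q, hq, h⟩ | ⟨ha, hb, ha', hb'⟩)
        · left
          refine ⟨q, hq, p, hp, ?_⟩
          rw [← h]
          simp only [Groupoid.inv_eq_inv, Category.assoc, IsIso.hom_inv_id, Category.comp_id]
          erw [Category.assoc, IsIso.hom_inv_id, Category.comp_id]
        · right; exact ⟨hb, ha, hb', ha'⟩
      mul := by
        rintro a b c f (⟨p, hp, q, hq, h⟩ | ⟨ha, hb, ha', hb'⟩) g
          (⟨q', hq', r', hr', h'⟩ | ⟨hb2, hc, hb2', hc'⟩)
        · left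
          obtain ⟨r'', hr'', h''⟩ := key b c q q' hq hq' g r' hr' h'
          exact ⟨p, hp, r'', hr'', by erw [← Category.assoc, h, h'']⟩
        · exact absurd ⟨q, hq⟩ hb2
        · exact absurd ⟨q', hq'⟩ hb
        · right; exact ⟨ha, hc, ha', hc'⟩ }
  have hle : Subgroupoid.generated
      (fun a b : FundamentalGroupoid X => {f : a ⟶ b | ∃ p ∈ P a.as b.as, f = ⟦p⟧}) ≤ S' := by
    apply sInf_le
    rintro a b f ⟨r, hr, rfl⟩
    by_cases hxa : ∃ p, p ∈ P x₀ a.as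
    · obtain ⟨p, hp⟩ := hxa
      obtain ⟨q, hq, hhq⟩ := hcomp x₀ a.as b.as p hp r hr
      exact Or.inl ⟨p, hp, q, hq, by rw [fg_comp_eq_trans]; exact Quotient.sound hhq⟩
    · have hxb : ¬ ∃ q, q ∈ P x₀ b.as := fun hb => hxa (bwd a.as b.as ⟨r, hr⟩ hb)
      have cast : ∀ {u v : X}, u = x₀ → (∃ p, p ∈ P u v) → ∃ q, q ∈ P x₀ v := by
        rintro u v rfl h; exact h
      have ha' : a.as ≠ x₀ := fun hax => hxa (bwd a.as b.as ⟨r, hr⟩ (cast hax ⟨r, hr⟩))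
      obtain ⟨r', hr'⟩ := hopp a.as b.as r hr
      have hb' : b.as ≠ x₀ := fun hbx => hxa (cast hbx ⟨r', hr'⟩)
      exact Or.inr ⟨hxa, hxb, ha', hb'⟩
  intro f hf
  have hf' := (Subgroupoid.le_iff _ _).mp hle hf
  rcases hf' with ⟨p, hp, q, hq, h⟩ | ⟨-, -, hne, -⟩
  · obtain ⟨pinv, hpinv, hh⟩ := hinv p hp
    have h1 : (⟦p⟧ ≫ ⟦pinv⟧ : FundamentalGroupoid.mk x₀ ⟶ FundamentalGroupoid.mk x₀)
        = 𝟙 (FundamentalGroupoid.mk x₀) := by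
      rw [fg_comp_eq_trans, fg_id_eq]; exact Quotient.sound hh
    have h2 := comp_eq_id_swap h1
    have h3 : f = (⟦pinv⟧ : FundamentalGroupoid.mk x₀ ⟶ FundamentalGroupoid.mk x₀) ≫ ⟦q⟧ := by
      erw [← h, ← Category.assoc, h2, Category.id_comp]
    obtain ⟨w, hw, hhw⟩ := hcomp x₀ x₀ x₀ pinv hpinv q hq
    exact ⟨w, hw, by rw [h3, fg_comp_eq_trans]; exact Quotient.sound hhw⟩
  · exact absurd rfl hne
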